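/- Let H ∈ ℝ^{n×n} be symmetric and invertible, let W ∈ ℝ^{n×t}, let ρ ∈ ℝᵗ, and let θ̃ ∈ ℝ with θ̃ ≠ 0. Then (H W)^T (H W) ρ = θ̃ (H W)^T W ρ holds if and only if (H W)^T H^{-1} (H W) ρ = (1/θ̃) (H W)^T (H W) ρ. In particular, the nonzero generalized eigenvalues θ̃ of the pencil ((HW)^T HW, (HW)^T W) are the reciprocals of the Ritz values of H^{-1} with respect to the columns of H W. -/
import Mathlib

open Matrix

/-- **Harmonic Ritz values as reciprocal Ritz values of `H⁻¹`.**
For symmetric invertible `H ∈ ℝ^{n×n}`, `W ∈ ℝ^{n×t}`, `ρ ∈ ℝᵗ` and `θ̃ ≠ 0`: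
`(HW)ᵀ(HW) ρ = θ̃ (HW)ᵀ W ρ` iff `(HW)ᵀ H⁻¹ (HW) ρ = (1/θ̃) (HW)ᵀ(HW) ρ`.
In particular the nonzero generalized eigenvalues `θ̃` of the pencil
`((HW)ᵀHW, (HW)ᵀW)` are the reciprocals of the Ritz values of `H⁻¹` with respect to the
columns of `HW`. -/
theorem harmonic_ritz_reciprocal (n t : ℕ)
    (H : Matrix (Fin n) (Fin n) ℝ) (W : Matrix (Fin n) (Fin t) ℝ)
    (hsymm : Hᵀ = H) (hH : IsUnit H.det)
    (ρ : Fin t → ℝ) (θ : ℝ) (hθ : θ ≠ 0) :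
    ((H * W)ᵀ * (H * W)).mulVec ρ = θ • ((H * W)ᵀ * W).mulVec ρ ↔
      ((H * W)ᵀ * H⁻¹ * (H * W)).mulVec ρ
        = (1 / θ) • (((H * W)ᵀ * (H * W)).mulVec ρ) := by
  have key : (H * W)ᵀ * H⁻¹ * (H * W) = (H * W)ᵀ * W := by
    rw [Matrix.transpose_mul, hsymm]
    calc Wᵀ * H * H⁻¹ * (H * W) = Wᵀ * (H * H⁻¹) * (H * W) := by
          rw [Matrix.mul_assoc Wᵀ H H⁻¹]
      _ = Wᵀ * (H * W) := by rw [Matrix.mul_nonsing_inv H hH, Matrix.mul_one]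
      _ = Wᵀ * H * W := by rw [Matrix.mul_assoc]
  rw [key]
  constructor
  · intro h
    rw [h, smul_smul, one_div_mul_cancel hθ, one_smul]
  · intro h
    rw [h, smul_smul, mul_one_div_cancel hθ, one_smul]
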